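/- Let $K$ be a discrete valuation field with residue characteristic $p > 0$, $t \ge 1$, $r \ge 1$. The truncated exponential homomorphism $E \colon \mathfrak{m}_K^t/\mathfrak{m}_K^{pt} \otimes_{O_K} \Omega^r_{O_K}(\log) \to U^t K_{r+1}^M(K)/U^{pt} K_{r+1}^M(K)$ kills the image of the exterior derivative $d \colon \mathfrak{m}_K^t/\mathfrak{m}_K^{pt} \otimes_{O_K} \Omega^{r-1}_{O_K}(\log) \to \mathfrak{m}_K^t/\mathfrak{m}_K^{pt} \otimes_{O_K} \Omega^r_{O_K}(\log)$. -/

import Mathlib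

noncomputable section
open Finsupp Sum

/-! Log differential forms `Ω¹_A(log)` for a subring `A` of a field `K`:
generators `d x` (`x ∈ A`) and `dlog u` (`u ∈ Kˣ`), with relations
`d(x+y) = dx + dy`, `d(xy) = x dy + y dx`, `dlog(uv) = dlog u + dlog v`,
and `dx = x · dlog x` for `x ∈ A ∖ {0}` (with image the unit `u` of `K`). -/

/-- The submodule of relations defining the module of log differentials. -/
def LogDiffRels (A : Type*) [CommRing A] (K : Type*) [Field K] [Algebra A K] :
    Submodule A ((A ⊕ Kˣ) →₀ A) :=
  Submodule.span A
    ({f | ∃ x y : A, f = single (inl (x + y)) 1 - single (inl x) 1 - single (inl y) 1} ∪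
     {f | ∃ x y : A, f = single (inl (x * y)) 1 - x • single (inl y) 1 - y • single (inl x) 1} ∪
     {f | ∃ x y : Kˣ, f = single (inr (x * y)) 1 - single (inr x) 1 - single (inr y) 1} ∪
     {f | ∃ (x : A) (u : Kˣ), algebraMap A K x = (u : K) ∧
        f = single (inl x) 1 - x • single (inr u) 1})

/-- The module `Ω¹_A(log)` of log differentials. -/
abbrev LogDiff (A : Type*) [CommRing A] (K : Type*) [Field K] [Algebra A K] :=
  ((A ⊕ Kˣ) →₀ A) ⧸ LogDiffRels A K

/-- `d x ∈ Ω¹_A(log)` for `x ∈ A`. -/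
def logD {A : Type*} [CommRing A] {K : Type*} [Field K] [Algebra A K] (x : A) :
    LogDiff A K :=
  Submodule.Quotient.mk (single (inl x) 1)

/-- `dlog u ∈ Ω¹_A(log)` for `u ∈ Kˣ`. -/
def logDlog {A : Type*} [CommRing A] {K : Type*} [Field K] [Algebra A K] (u : Kˣ) :
    LogDiff A K :=
  Submodule.Quotient.mk (single (inr u) 1)

/-- The wedge `v 0 ∧ ⋯ ∧ v (n-1)` as an element of the `n`-th exterior power. -/
def wedge {R : Type*} [CommRing R] {M : Type*} [AddCommGroup M] [Module R M]
    (n : ℕ) (v : Fin n → M) : ⋀[R]^n M :=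
  ⟨ExteriorAlgebra.ιMulti R n v, ExteriorAlgebra.ιMulti_range R n (Set.mem_range_self _)⟩

/-! Milnor K-theory `K^M_n(K)`: the quotient of the free abelian group on symbols
`{v 0, …, v (n-1)}` (`v i ∈ Kˣ`) by multilinearity and the Steinberg relations. -/

/-- Relations defining Milnor K-theory. -/
def MilnorRels (K : Type*) [Field K] (n : ℕ) : AddSubgroup ((Fin n → Kˣ) →₀ ℤ) :=
  AddSubgroup.closure
    ({f | ∃ (v : Fin n → Kˣ) (i : Fin n) (y z : Kˣ),
        f = single (Function.update v i (y * z)) 1 - single (Function.update v i y) 1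
              - single (Function.update v i z) 1} ∪
     {f | ∃ v : Fin n → Kˣ, (∃ i j : Fin n, i ≠ j ∧ (v i : K) + (v j : K) = 1) ∧
        f = single v 1})

/-- The `n`-th Milnor K-group of the field `K`. -/
abbrev MilnorK (K : Type*) [Field K] (n : ℕ) :=
  ((Fin n → Kˣ) →₀ ℤ) ⧸ MilnorRels K n

/-- The Milnor symbol `{v 0, …, v (n-1)}`. -/
def MilnorSym (K : Type*) [Field K] (n : ℕ) (v : Fin n → Kˣ) : MilnorK K n :=
  QuotientAddGroup.mk (single v 1)

/-- The unit filtration `U^i K^M_{n+1}(K)`: the subgroup generated by symbols whose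
first entry is a unit of `O` congruent to `1` mod `𝔪^i`. -/
def UFilMilnor (O : Type*) [CommRing O] [IsLocalRing O]
    (K : Type*) [Field K] [Algebra O K] (n i : ℕ) : AddSubgroup (MilnorK K (n + 1)) :=
  AddSubgroup.closure
    {w | ∃ (v : Fin (n + 1) → Kˣ) (x : O),
      x - 1 ∈ (IsLocalRing.maximalIdeal O) ^ i ∧ algebraMap O K x = (v 0 : K) ∧
      w = MilnorSym K (n + 1) v}

/-- The truncated exponential `E(x) = ∑_{i<p} x^i / i!` evaluated in a ring in which
the factorials `i!` (`i < p`) are invertible. -/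
def truncE (p : ℕ) {O : Type*} [CommRing O] (x : O) : O :=
  ∑ i ∈ Finset.range p, Ring.inverse ((i.factorial : O)) * x ^ i

end


set_option maxHeartbeats 2000000
set_option linter.unusedSectionVars false
set_option linter.unnecessarySimpa false

section RingFacts


variable {p : ℕ} [Fact p.Prime]
variable {O : Type*} [CommRing O] [IsLocalRing O]

open IsLocalRing Finset

lemma cast_mem_max (hp : CharP (ResidueField O) p) : (p : O) ∈ maximalIdeal O := by
  have h0 : ((p : ℕ) : ResidueField O) = 0 := CharP.cast_eq_zero _ p
  have : (Ideal.Quotient.mk (maximalIdeal O)) ((p : ℕ) : O) = 0 := by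
    rw [map_natCast]; exact h0
  exact (Ideal.Quotient.eq_zero_iff_mem).mp this


lemma isUnit_one_add_mem {x : O} (hx : x ∈ maximalIdeal O) : IsUnit (1 + x) := by
  by_contra hcon
  have h1 : (1 + x) ∈ maximalIdeal O := hcon
  have : (1 : O) ∈ maximalIdeal O := by
    have := Ideal.sub_mem _ h1 hx
    simpa using this
  exact (maximalIdeal.isMaximal O).ne_top ((Ideal.eq_top_iff_one _).mpr this)

lemma isUnit_natCast_of_not_dvd (hp : CharP (ResidueField O) p) {n : ℕ} (hn : ¬ p ∣ n) :
    IsUnit (n : O) := by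
  by_contra hcon
  have h1 : ((n : ℕ) : O) ∈ maximalIdeal O := hcon
  have : ((n : ℕ) : ResidueField O) = 0 := by
    have : (Ideal.Quotient.mk (maximalIdeal O)) ((n : ℕ) : O) = 0 :=
      (Ideal.Quotient.eq_zero_iff_mem).mpr h1
    rwa [map_natCast] at this
  exact hn ((CharP.cast_eq_zero_iff (ResidueField O) p n).mp this)

lemma pow_p_sub_one_mem (hp : CharP (ResidueField O) p) {c : O} {s : ℕ} (hs : 1 ≤ s)
    (hc : c - 1 ∈ (maximalIdeal O) ^ s) : c ^ p - 1 ∈ (maximalIdeal O) ^ (s + 1) := by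
  have hprime := (Fact.out : p.Prime)
  have hc' : c = (c - 1) + 1 := by ring
  rw [hc', add_pow]
  have : (∑ k ∈ range (p + 1), (c-1) ^ k * 1 ^ (p - k) * (p.choose k : O)) - 1
      = ∑ i ∈ range p, ((c-1) ^ (i+1) * (p.choose (i+1) : O)) := by
    rw [Finset.sum_range_succ']
    simp [mul_comm]
  rw [this]
  apply Ideal.sum_mem
  intro i hi
  have hi' : i + 1 ≤ p := by simpa [Nat.succ_le_iff] using Finset.mem_range.mp hi
  rcases eq_or_lt_of_le hi' with heq | hlt
  · -- i+1 = p : term is (c-1)^p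
    have : (c - 1) ^ (i+1) ∈ (maximalIdeal O) ^ (s * (i+1)) := by
      rw [pow_mul]; exact Ideal.pow_mem_pow hc _
    have h2 : 2 ≤ i + 1 := by have := hprime.two_le; omega
    have hle : s + 1 ≤ s * (i + 1) := by nlinarith
    exact Ideal.mul_mem_right _ _ (Ideal.pow_le_pow_right hle this)
  · -- i+1 < p : p divides choose
    have hdvd : p ∣ p.choose (i+1) := hprime.dvd_choose_self (Nat.succ_ne_zero i) hlt
    obtain ⟨d, hd⟩ := hdvd
    have : (p.choose (i+1) : O) = (p : O) * (d : O) := by exact_mod_cast congrArg (Nat.cast : ℕ → O) hd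
    rw [this]
    have h1 : (c-1)^(i+1) ∈ (maximalIdeal O)^s := by
      have : (c-1)^(i+1) ∈ (maximalIdeal O)^(s*(i+1)) := by
        rw [pow_mul]; exact Ideal.pow_mem_pow hc _
      exact Ideal.pow_le_pow_right (by nlinarith) this
    have h2 : (p : O) ∈ maximalIdeal O := cast_mem_max hp
    have hm := Ideal.mul_mem_mul h1 h2
    rw [← pow_succ] at hm
    rw [show (c-1)^(i+1) * ((p:O)*(d:O)) = ((c-1)^(i+1) * (p:O)) * d from by ring]
    exact Ideal.mul_mem_right _ _ hm

lemma pow_p_pow_sub_one_mem (hp : CharP (ResidueField O) p) {c : O} {s : ℕ} (hs : 1 ≤ s)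
    (hc : c - 1 ∈ (maximalIdeal O) ^ s) (r : ℕ) :
    c ^ (p ^ r) - 1 ∈ (maximalIdeal O) ^ (s + r) := by
  induction r with
  | zero => simpa using hc
  | succ r ih =>
      have := pow_p_sub_one_mem hp (s := s + r) (by omega) ih
      rw [← pow_mul] at this
      rw [pow_succ]
      exact this
      
end RingFacts

section PolyFact
open Polynomial Finset


/-- `(p-1)! · E(T)` with integer coefficients. -/
noncomputable def EZpoly (p : ℕ) : Polynomial ℤ :=
  ∑ i ∈ Finset.range p, C (((p-1).factorial / i.factorial : ℕ) : ℤ) * X^i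

lemma pow_one_sub_X_pow (k n : ℕ) :
    ∃ Cp : Polynomial ℤ, (1 - X^k)^n = 1 - C (n:ℤ) * X^k + X^k * X^k * Cp := by
  induction n with
  | zero => exact ⟨0, by simp⟩
  | succ n ih =>
      obtain ⟨Cp, h⟩ := ih
      refine ⟨Cp * (1 - X^k) + C (n:ℤ), ?_⟩
      rw [pow_succ, h]
      simp only [Nat.cast_add, Nat.cast_one, map_add, map_one]
      ring

lemma EZpoly_coeff_zero (p : ℕ) (hp : 0 < p) : (EZpoly p).coeff 0 = ((p-1).factorial : ℤ) := by
  unfold EZpoly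
  rw [finset_sum_coeff]
  rw [Finset.sum_eq_single 0]
  · simp
  · intro i hi hne
    simp [coeff_X_pow, hne, Ne.symm hne]
  · intro hd; exact absurd (Finset.mem_range.mpr hp) hd

lemma exists_EZ_fact (p M : ℕ) (hp : p.Prime) :
    ∃ (n : ℕ → ℕ) (g h : Polynomial ℤ),
      EZpoly p = C ((p-1).factorial : ℤ) * (∏ i ∈ Finset.Ico 1 p, (1 - X^i)^(n i))
        + C ((p:ℤ)^M) * g + X^p * h := by
  set D : ℤ := ((p-1).factorial : ℤ) with hD
  set P : ℤ := (p:ℤ)^M with hP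
  have hnd : ¬ p ∣ (p-1).factorial := by
    rw [Nat.Prime.dvd_factorial hp]
    have := hp.pos; omega
  have hcop : Nat.Coprime ((p-1).factorial) (p^M) :=
    Nat.Coprime.pow_right M (((Nat.Prime.coprime_iff_not_dvd hp).mpr hnd).symm)
  have hDP : IsCoprime D P := by
    rw [hD, hP, show ((p:ℤ))^M = ((p^M:ℕ):ℤ) from by push_cast; ring]
    exact Int.isCoprime_iff_gcd_eq_one.mpr
      (by rw [Int.gcd_natCast_natCast]; exact hcop)
  have hP0 : P ≠ 0 := by
    rw [hP]
    exact pow_ne_zero _ (by exact_mod_cast hp.pos.ne')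
  have main : ∀ k, 1 ≤ k → k ≤ p →
      ∃ (n : ℕ → ℕ) (g h : Polynomial ℤ),
        EZpoly p = C D * (∏ i ∈ Finset.Ico 1 k, (1 - X^i)^(n i)) + C P * g + X^k * h := by
    intro k hk1
    induction k, hk1 using Nat.le_induction with
    | base =>
        intro _
        have hdvd : X ∣ (EZpoly p - C D) := by
          rw [X_dvd_iff, coeff_sub, EZpoly_coeff_zero p hp.pos, coeff_C]
          simp [hD]
        obtain ⟨h, hh⟩ := hdvd
        exact ⟨fun _ => 0, 0, h, by simp [← hh]⟩
    | succ k hk ih =>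
        intro hkp
        obtain ⟨n, g, h, hyp⟩ := ih (by omega)
        set Q : Polynomial ℤ := ∏ i ∈ Finset.Ico 1 k, (1 - X^i)^(n i) with hQdef
        obtain ⟨α, β, hαβ⟩ := hDP
        set c : ℤ := h.coeff 0 with hc
        set w : ℤ := -c * α with hwdef
        have hw : D * w + c = c * β * P := by
          rw [hwdef]; linear_combination (-c) * hαβ
        set ν : ℕ := (w % P).toNat with hν
        have hνval : (ν:ℤ) = w % P := Int.toNat_of_nonneg (Int.emod_nonneg w hP0)
        set z : ℤ := c * β - D * (w / P) with hzdef
        have hz : c + D * (ν:ℤ) = P * z := by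
          rw [hνval, Int.emod_def, hzdef]; linear_combination hw
        obtain ⟨Cp, hCp⟩ := pow_one_sub_X_pow k ν
        set h₁ : Polynomial ℤ := h + C D * Q * (C (ν:ℤ) - X^k * Cp) with hh₁
        have identity1 : EZpoly p = C D * (Q * (1 - X^k)^ν) + C P * g + X^k * h₁ := by
          rw [hCp, hh₁]; linear_combination hyp
        have hQ0 : Q.coeff 0 = 1 := by
          have : Q.coeff 0 = Polynomial.constantCoeff Q := rfl
          rw [this, hQdef, map_prod]
          apply Finset.prod_eq_one
          intro i hi
          have hi1 : 1 ≤ i := (Finset.mem_Ico.mp hi).1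
          rw [map_pow, map_sub, map_one]
          have : Polynomial.constantCoeff (X^i : Polynomial ℤ) = 0 := by
            rw [Polynomial.constantCoeff_apply, coeff_X_pow]
            simp [show ¬ (0 = i) by omega]
          rw [this]; simp
        have h₁0 : h₁.coeff 0 = P * z := by
          rw [hh₁, coeff_add, mul_coeff_zero, mul_coeff_zero, coeff_sub, mul_coeff_zero,
            coeff_C, hQ0, coeff_X_pow, coeff_C]
          have : ¬ (0 = k) := by omega
          simp [this, ← hc]
          linear_combination hz
        have hdvd : X ∣ (h₁ - C (P * z)) := by
          rw [X_dvd_iff, coeff_sub, h₁0, coeff_C]; simp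
        obtain ⟨h₂, hsplit⟩ := hdvd
        have hsplit' : h₁ = C (P * z) + X * h₂ := by linear_combination hsplit
        refine ⟨Function.update n k ν, g + C z * X^k, h₂, ?_⟩
        have hQprod : (∏ i ∈ Finset.Ico 1 (k+1), (1 - X^i)^(Function.update n k ν i))
            = Q * (1 - X^k)^ν := by
          rw [Finset.prod_Ico_succ_top hk]
          congr 1
          · rw [hQdef]
            apply Finset.prod_congr rfl
            intro i hi
            have : i ≠ k := by have := (Finset.mem_Ico.mp hi).2; omega
            rw [Function.update_of_ne this]
          · rw [Function.update_self]
        rw [hQprod, identity1, hsplit', map_mul]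
        ring
  obtain ⟨n, g, h, hfin⟩ := main p hp.pos le_rfl
  exact ⟨n, g, h, hfin⟩

end PolyFact

section Transfer
open Polynomial Finset IsLocalRing


variable {p : ℕ} [Fact p.Prime] {O : Type*} [CommRing O] [IsLocalRing O]

lemma mem_max_of_pos {a : O} {t i : ℕ} (ht : 1 ≤ t) (ha : a ∈ (maximalIdeal O)^t)
    (hi : 1 ≤ i) : a ^ i ∈ maximalIdeal O := by
  have h1 : a ∈ maximalIdeal O := Ideal.pow_le_self (by omega) ha
  have := Ideal.pow_mem_pow h1 i
  exact Ideal.pow_le_self (by omega) this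

lemma isUnit_one_sub_pow {a : O} {t i : ℕ} (ht : 1 ≤ t) (ha : a ∈ (maximalIdeal O)^t)
    (hi : 1 ≤ i) : IsUnit (1 - a^i) := by
  rw [sub_eq_add_neg]
  exact isUnit_one_add_mem (Submodule.neg_mem _ (mem_max_of_pos ht ha hi))

lemma truncE_factor (hp : CharP (ResidueField O) p) {t : ℕ} (ht : 1 ≤ t)
    {a : O} (ha : a ∈ (maximalIdeal O)^t) :
    ∃ (n : ℕ → ℕ) (ε : O), ε ∈ (maximalIdeal O)^(p*t) ∧
      truncE p a = (∏ i ∈ Finset.Ico 1 p, (1 - a^i)^(n i)) * (1 + ε) := by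
  have hprime : p.Prime := Fact.out
  have hnd : ¬ p ∣ (p-1).factorial := by
    rw [Nat.Prime.dvd_factorial hprime]
    have := hprime.pos; omega
  have hD : IsUnit (((p-1).factorial : ℕ) : O) := isUnit_natCast_of_not_dvd hp hnd
  -- aeval of EZpoly
  have hEZa : (Polynomial.aeval a) (EZpoly p) = (((p-1).factorial : ℕ) : O) * truncE p a := by
    unfold EZpoly truncE
    rw [map_sum, Finset.mul_sum]
    apply Finset.sum_congr rfl
    intro i hi
    have hip : i < p := Finset.mem_range.mp hi
    have hfaci : IsUnit ((i.factorial : ℕ) : O) := by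
      apply isUnit_natCast_of_not_dvd hp
      rw [Nat.Prime.dvd_factorial hprime]; omega
    have hdvd : i.factorial ∣ (p-1).factorial :=
      Nat.factorial_dvd_factorial (by omega)
    have hkey : (((p-1).factorial : ℕ) : O) * Ring.inverse ((i.factorial : O))
        = (((p-1).factorial / i.factorial : ℕ) : O) := by
      have h1 : (((p-1).factorial / i.factorial : ℕ) : O) * ((i.factorial : ℕ) : O)
          = (((p-1).factorial : ℕ) : O) := by
        rw [← Nat.cast_mul, Nat.div_mul_cancel hdvd]
      calc (((p-1).factorial : ℕ) : O) * Ring.inverse ((i.factorial : O))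
          = (((p-1).factorial / i.factorial : ℕ) : O) *
              (((i.factorial : ℕ) : O) * Ring.inverse ((i.factorial : O))) := by
            rw [← mul_assoc, h1]
        _ = (((p-1).factorial / i.factorial : ℕ) : O) := by
            rw [Ring.mul_inverse_cancel _ hfaci, mul_one]
    rw [map_mul, aeval_C, map_pow, aeval_X, ← mul_assoc, hkey, map_natCast]
  obtain ⟨n, g, h, hfact⟩ := exists_EZ_fact p (p*t) hprime
  have happ := congrArg (Polynomial.aeval a) hfact
  rw [hEZa] at happ
  simp only [map_add, map_mul, map_pow, map_prod, map_sub, map_one, aeval_C, aeval_X] at happ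
  set Pd : O := ∏ i ∈ Finset.Ico 1 p, (1 - a^i)^(n i) with hPd
  have happ' : (((p-1).factorial : ℕ) : O) * truncE p a
      = (((p-1).factorial : ℕ) : O) * Pd + ((p:O)^(p*t) * (aeval a g) + a^p * (aeval a h)) := by
    rw [happ]; push_cast; ring
  set δ : O := (p:O)^(p*t) * (aeval a g) + a^p * (aeval a h) with hδ
  have hδmem : δ ∈ (maximalIdeal O)^(p*t) := by
    apply Ideal.add_mem
    · exact Ideal.mul_mem_right _ _ (Ideal.pow_mem_pow (cast_mem_max hp) _)
    · apply Ideal.mul_mem_right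
      have h1 : a^p ∈ ((maximalIdeal O)^t)^p := Ideal.pow_mem_pow ha p
      rw [← pow_mul, mul_comm t p] at h1
      exact h1
  have hPdunit : IsUnit Pd := by
    rw [hPd]
    apply Finset.prod_induction _ IsUnit (fun x y hx hy => hx.mul hy) isUnit_one
    intro i hi
    exact (isUnit_one_sub_pow ht ha (Finset.mem_Ico.mp hi).1).pow _
  -- cancel the factorial unit
  obtain ⟨uD, huD⟩ := hD
  obtain ⟨uP, huP⟩ := hPdunit
  rw [← huD] at happ'
  have hTr : truncE p a = Pd + (↑uD⁻¹ : O) * δ := by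
    apply (Units.mul_right_inj uD).mp
    rw [happ', mul_add, ← mul_assoc, Units.mul_inv, one_mul]
  refine ⟨n, (↑uP⁻¹ : O) * ((↑uD⁻¹ : O) * δ), ?_, ?_⟩
  · exact Ideal.mul_mem_left _ _ (Ideal.mul_mem_left _ _ hδmem)
  · rw [hTr, ← hPd, ← huP]
    have hinv : (↑uP : O) * (↑uP⁻¹ : O) = 1 := Units.mul_inv uP
    linear_combination (-(((↑uD⁻¹ : O) * ((p:O) ^ (p * t) * (Polynomial.aeval a) g)
      + (↑uD⁻¹ : O) * (a ^ p * (Polynomial.aeval a) h)))) * hinv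

end Transfer

section MilnorCalc


open Finsupp

variable {K : Type*} [Field K] {N : ℕ}

lemma milnor_update_mul (v : Fin N → Kˣ) (i : Fin N) (y z : Kˣ) :
    MilnorSym K N (Function.update v i (y * z))
      = MilnorSym K N (Function.update v i y) + MilnorSym K N (Function.update v i z) := by
  unfold MilnorSym
  rw [← QuotientAddGroup.mk_add, QuotientAddGroup.eq_iff_sub_mem]
  rw [sub_add_eq_sub_sub]
  exact AddSubgroup.subset_closure (Set.mem_union_left _ ⟨v, i, y, z, rfl⟩)

lemma milnor_steinberg (v : Fin N → Kˣ) (i j : Fin N) (hij : i ≠ j)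
    (h : (v i : K) + (v j : K) = 1) : MilnorSym K N v = 0 := by
  unfold MilnorSym
  rw [QuotientAddGroup.eq_zero_iff]
  exact AddSubgroup.subset_closure (Set.mem_union_right _ ⟨v, ⟨i, j, hij, h⟩, rfl⟩)

lemma milnor_update_one (v : Fin N → Kˣ) (i : Fin N) :
    MilnorSym K N (Function.update v i 1) = 0 := by
  have h := milnor_update_mul (K := K) v i 1 1
  rw [one_mul] at h
  exact (add_eq_left.mp h.symm)

lemma milnor_update_pow (v : Fin N → Kˣ) (i : Fin N) (y : Kˣ) (k : ℕ) :
    MilnorSym K N (Function.update v i (y ^ k))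
      = k • MilnorSym K N (Function.update v i y) := by
  induction k with
  | zero =>
      rw [pow_zero, zero_nsmul]
      exact milnor_update_one v i
  | succ k ih => rw [pow_succ, milnor_update_mul, ih, succ_nsmul]

lemma milnor_update_prod {ι : Type*} (v : Fin N → Kˣ) (i : Fin N)
    (s : Finset ι) (c : ι → Kˣ) :
    MilnorSym K N (Function.update v i (∏ j ∈ s, c j))
      = ∑ j ∈ s, MilnorSym K N (Function.update v i (c j)) := by
  classical
  induction s using Finset.induction with
  | empty => simpa using milnor_update_one v i
  | insert _ _ hj ih =>
      rw [Finset.prod_insert hj, milnor_update_mul, ih, Finset.sum_insert hj]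

-- cons versions
lemma milnor_cons_mul (q : Fin N → Kˣ) (y z : Kˣ) :
    MilnorSym K (N+1) (Fin.cons (y * z) q)
      = MilnorSym K (N+1) (Fin.cons y q) + MilnorSym K (N+1) (Fin.cons z q) := by
  have h := milnor_update_mul (K := K) (Fin.cons 1 q) 0 y z
  simpa only [Fin.update_cons_zero] using h

lemma milnor_cons_pow (q : Fin N → Kˣ) (y : Kˣ) (k : ℕ) :
    MilnorSym K (N+1) (Fin.cons (y ^ k) q) = k • MilnorSym K (N+1) (Fin.cons y q) := by
  have h := milnor_update_pow (K := K) (Fin.cons 1 q) 0 y k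
  simpa only [Fin.update_cons_zero] using h

lemma milnor_cons_prod {ι : Type*} (q : Fin N → Kˣ) (s : Finset ι) (c : ι → Kˣ) :
    MilnorSym K (N+1) (Fin.cons (∏ j ∈ s, c j) q)
      = ∑ j ∈ s, MilnorSym K (N+1) (Fin.cons (c j) q) := by
  have h := milnor_update_prod (K := K) (Fin.cons 1 q) 0 s c
  simpa only [Fin.update_cons_zero] using h

lemma update_one_cons_cons (b c z : Kˣ) (r : Fin N → Kˣ) :
    Function.update (Fin.cons b (Fin.cons c r) : Fin (N+1+1) → Kˣ) 1 z
      = Fin.cons b (Fin.cons z r) := by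
  funext j
  refine Fin.cases ?_ (fun j' => ?_) j
  · rw [Function.update_of_ne (by simp : (0 : Fin (N+1+1)) ≠ 1)]
    simp
  · rw [← Fin.succ_zero_eq_one]
    refine Fin.cases ?_ (fun j'' => ?_) j'
    · rw [Function.update_self]
      simp [Fin.cons_succ]
    · rw [Function.update_of_ne (fun hcon => (Fin.succ_ne_zero _) (Fin.succ_injective _ hcon))]
      simp [Fin.cons_succ]

lemma milnor_cons_cons_pow (b y : Kˣ) (r : Fin N → Kˣ) (k : ℕ) :
    MilnorSym K (N+1+1) (Fin.cons b (Fin.cons (y ^ k) r))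
      = k • MilnorSym K (N+1+1) (Fin.cons b (Fin.cons y r)) := by
  have h := milnor_update_pow (K := K) (Fin.cons b (Fin.cons 1 r)) 1 y k
  simpa only [update_one_cons_cons] using h

end MilnorCalc

section Key
open IsLocalRing


variable {p : ℕ} [Fact p.Prime] {O : Type*} [CommRing O] [IsLocalRing O]
  {K : Type*} [Field K] [Algebra O K]

lemma key_vanish (hp : CharP (ResidueField O) p) {t : ℕ} (ht : 1 ≤ t) {m : ℕ}
    {a : O} (ha : a ∈ (maximalIdeal O)^t)
    {u uE : Kˣ} (hu : (u : K) = algebraMap O K a)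
    (huE : (uE : K) = algebraMap O K (truncE p a)) (y : Fin m → Kˣ) :
    MilnorSym K (m+1+1) (Fin.cons uE (Fin.cons u y)) ∈ UFilMilnor O K (m+1) (p*t) := by
  have hprime : p.Prime := Fact.out
  obtain ⟨n, ε, hε, hfac⟩ := truncE_factor hp ht ha
  have hpt1 : 1 ≤ p * t := Nat.mul_le_mul hprime.one_lt.le ht |>.trans' (by omega)
  have hεm : ε ∈ maximalIdeal O := Ideal.pow_le_self (by omega) hε
  -- units of K
  have hbK : ∀ i : ℕ, 1 ≤ i → IsUnit (algebraMap O K (1 - a^i)) :=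
    fun i hi => (isUnit_one_sub_pow ht ha hi).map (algebraMap O K)
  have hwK : IsUnit (algebraMap O K (1 + ε)) :=
    (isUnit_one_add_mem hεm).map (algebraMap O K)
  set b : ℕ → Kˣ := fun i => if h : 1 ≤ i then (hbK i h).unit else 1 with hbdef
  have hbval : ∀ i : ℕ, 1 ≤ i → (b i : K) = algebraMap O K (1 - a^i) := by
    intro i hi
    rw [hbdef]
    simp only [dif_pos hi]
    exact IsUnit.unit_spec _
  set w : Kˣ := hwK.unit with hwdef
  have hwval : (w : K) = algebraMap O K (1 + ε) := IsUnit.unit_spec _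
  set q : Fin (m+1) → Kˣ := Fin.cons u y with hq
  -- uE as a product of units
  have huEeq : uE = (∏ i ∈ Finset.Ico 1 p, (b i)^(n i)) * w := by
    apply Units.ext
    rw [huE, hfac, map_mul, map_prod]
    rw [Units.val_mul, hwval, Units.coe_prod]
    congr 1
    apply Finset.prod_congr rfl
    intro i hi
    rw [map_pow, Units.val_pow_eq_pow_val, hbval i (Finset.mem_Ico.mp hi).1]
  -- work with subgroup membership directly
  have hexp : MilnorSym K (m+1+1) (Fin.cons uE q)
      = (∑ i ∈ Finset.Ico 1 p, n i • MilnorSym K (m+1+1) (Fin.cons (b i) q))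
        + MilnorSym K (m+1+1) (Fin.cons w q) := by
    rw [huEeq, milnor_cons_mul, milnor_cons_prod]
    congr 1
    apply Finset.sum_congr rfl
    intro i _
    exact milnor_cons_pow q (b i) (n i)
  rw [hexp]
  apply AddSubgroup.add_mem
  · -- each b i term
    apply AddSubgroup.sum_mem
    intro i hi
    obtain ⟨hi1, hip⟩ := Finset.mem_Ico.mp hi
    apply AddSubgroup.nsmul_mem
    set X := MilnorSym K (m+1+1) (Fin.cons (b i) q) with hX
    -- i-torsion via Steinberg, exactly in MilnorK
    have hiX : i • X = 0 := by
      rw [hX, ← milnor_cons_cons_pow]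
      apply milnor_steinberg _ 0 1 (by simp)
      have h0 : (Fin.cons (b i) (Fin.cons (u^i) y) : Fin (m+1+1) → Kˣ) 0 = b i :=
        Fin.cons_zero _ _
      have h1 : (Fin.cons (b i) (Fin.cons (u^i) y) : Fin (m+1+1) → Kˣ) 1 = u^i := by
        rw [← Fin.succ_zero_eq_one, Fin.cons_succ, Fin.cons_zero]
      rw [h0, h1, hbval i hi1, Units.val_pow_eq_pow_val, hu, ← map_pow, ← map_add,
        sub_add_cancel, map_one]
    -- p-power torsion lands in the filtration
    have hPX : (p^((p-1)*t)) • X ∈ UFilMilnor O K (m+1) (p*t) := by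
      rw [hX, ← milnor_cons_pow]
      apply AddSubgroup.subset_closure
      refine ⟨Fin.cons ((b i)^(p^((p-1)*t))) q, (1 - a^i)^(p^((p-1)*t)), ?_, ?_, rfl⟩
      · have hmem : (1 - a^i) - 1 ∈ (maximalIdeal O)^t := by
          have h1 : a^i ∈ (maximalIdeal O)^(t*i) := by
            rw [pow_mul]; exact Ideal.pow_mem_pow ha i
          have h2 : a^i ∈ (maximalIdeal O)^t :=
            Ideal.pow_le_pow_right (Nat.le_mul_of_pos_right t hi1) h1
          have := Submodule.neg_mem _ h2
          simpa using this
        have := pow_p_pow_sub_one_mem hp ht hmem ((p-1)*t)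
        have heq : t + (p-1)*t = p*t := by
          obtain ⟨k, hk⟩ := Nat.exists_eq_add_of_le hprime.pos
          subst hk; simp; ring
        rwa [heq] at this
      · rw [Fin.cons_zero, map_pow, Units.val_pow_eq_pow_val, hbval i hi1]
    -- coprimality
    have hcop : Nat.Coprime i (p^((p-1)*t)) := by
      apply Nat.Coprime.pow_right
      have : ¬ p ∣ i := fun hdvd => by
        have := Nat.le_of_dvd (by omega) hdvd; omega
      exact ((hprime.coprime_iff_not_dvd).mpr this).symm
    have hcopZ : IsCoprime (i : ℤ) ((p^((p-1)*t) : ℕ) : ℤ) := by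
      rw [Int.isCoprime_iff_gcd_eq_one, Int.gcd_natCast_natCast]
      exact hcop
    obtain ⟨α, β, hαβ⟩ := hcopZ
    have hXeq : X = α • ((i:ℤ) • X) + β • (((p^((p-1)*t) : ℕ):ℤ) • X) := by
      rw [← mul_zsmul, ← mul_zsmul, ← add_zsmul, hαβ, one_zsmul]
    have h1 : ((i:ℤ) • X) = 0 := by rw [natCast_zsmul]; exact hiX
    rw [h1, smul_zero, zero_add, natCast_zsmul] at hXeq
    rw [hXeq]
    exact AddSubgroup.zsmul_mem _ hPX β
  · -- the 1+ε term
    apply AddSubgroup.subset_closure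
    refine ⟨Fin.cons w q, 1 + ε, by simpa using hε, ?_, rfl⟩
    rw [Fin.cons_zero, hwval]

end Key

set_option synthInstance.maxHeartbeats 1000000
set_option maxHeartbeats 2000000

open TensorProduct in
/-- the truncated exponential homomorphism
`E : 𝔪^t/𝔪^{pt} ⊗_O Ω^r_O(log) → U^t K^M_{r+1}(K)/U^{pt} K^M_{r+1}(K)` (here `r = m+1 ≥ 1`,
characterized by `x ⊗ dlog y₁ ∧ ⋯ ∧ dlog y_r ↦ {E(x), y₁, …, y_r}`) kills the image of
the exterior derivative `d : 𝔪^t/𝔪^{pt} ⊗ Ω^{r-1} → 𝔪^t/𝔪^{pt} ⊗ Ω^r`, whose image is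
generated by the classes of `h ⊗ d(hx) ∧ dlog y₁ ∧ ⋯ ∧ dlog y_{r-1}
= h ⊗ (x · dlog(hx)) ∧ dlog y₁ ∧ ⋯ ∧ dlog y_{r-1}` for `h` generating `𝔪^t`. -/
theorem stmt5 (p : ℕ) [Fact p.Prime]
    (O : Type*) [CommRing O] [IsDomain O] [IsDiscreteValuationRing O]
    (K : Type*) [Field K] [Algebra O K] [IsFractionRing O K]
    [CharP (IsLocalRing.ResidueField O) p]
    (t : ℕ) (ht : 1 ≤ t) (m : ℕ)
    (It Ipt : Submodule O O)
    (hIt : It = (IsLocalRing.maximalIdeal O) ^ t)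
    (hIpt : Ipt = (IsLocalRing.maximalIdeal O) ^ (p * t))
    (E : (Submodule.map Ipt.mkQ It ⊗[O] (⋀[O]^(m + 1) (LogDiff O K))) →+
        MilnorK K (m + 1 + 1) ⧸ UFilMilnor O K (m + 1) (p * t))
    (hE : ∀ (x : O) (hxm : x ∈ It) (y : Fin (m + 1) → Kˣ) (uEx : Kˣ),
        (uEx : K) = algebraMap O K (truncE p x) →
        E ((⟨Ipt.mkQ x, Submodule.mem_map_of_mem hxm⟩ : Submodule.map Ipt.mkQ It)
              ⊗ₜ[O] wedge (m + 1) fun j => logDlog (y j))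
          = QuotientAddGroup.mk (MilnorSym K (m + 1 + 1) (Fin.cons uEx y)))
    (h x : O) (hh : Ideal.span {h} = (IsLocalRing.maximalIdeal O) ^ t)
    (hhx : h ∈ It) (y : Fin m → Kˣ) (u : Kˣ)
    (hu : (u : K) = algebraMap O K (h * x)) :
    E ((⟨Ipt.mkQ h, Submodule.mem_map_of_mem hhx⟩ : Submodule.map Ipt.mkQ It)
          ⊗ₜ[O] wedge (m + 1) (Fin.cons (x • logDlog u) fun j => logDlog (y j)))
      = 0 := by
  classical
  have hprime : p.Prime := Fact.out
  -- h * x lies in I_t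
  have hxIt : h * x ∈ It := by
    have := It.smul_mem x hhx
    rwa [smul_eq_mul, mul_comm] at this
  have haM : h * x ∈ (IsLocalRing.maximalIdeal O) ^ t := by rwa [hIt] at hxIt
  -- the truncated exponential of h*x is a unit of O, hence of K
  have htrE : IsUnit (truncE p (h * x)) := by
    have hmem : truncE p (h * x) - 1 ∈ IsLocalRing.maximalIdeal O := by
      obtain ⟨k, hk⟩ := Nat.exists_eq_succ_of_ne_zero hprime.pos.ne'
      unfold truncE
      rw [hk, Finset.sum_range_succ']
      simp only [Nat.factorial_zero, Nat.cast_one, Ring.inverse_one, pow_zero, mul_one]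
      rw [add_sub_cancel_right]
      apply Ideal.sum_mem
      intro i _
      exact Ideal.mul_mem_left _ _ (mem_max_of_pos ht haM (Nat.succ_le_succ (Nat.zero_le i)))
    have := isUnit_one_add_mem (x := truncE p (h * x) - 1) hmem
    rwa [add_sub_cancel] at this
  have htrEK : IsUnit (algebraMap O K (truncE p (h * x))) := htrE.map (algebraMap O K)
  set uEx : Kˣ := htrEK.unit with huExdef
  have huEx : (uEx : K) = algebraMap O K (truncE p (h * x)) := IsUnit.unit_spec _
  -- rewrite the wedge argument
  have hfun : (Fin.cons (logDlog u) (fun j => logDlog (y j)) : Fin (m+1) → LogDiff O K)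
      = fun j => logDlog ((Fin.cons u y : Fin (m+1) → Kˣ) j) := by
    funext j
    refine Fin.cases ?_ (fun j' => ?_) j <;> simp [Fin.cons_zero, Fin.cons_succ]
  have hwedge : (wedge (m+1) (Fin.cons (x • logDlog u) (fun j => logDlog (y j)))
        : ⋀[O]^(m+1) (LogDiff O K))
      = x • wedge (m+1) (fun j => logDlog ((Fin.cons u y : Fin (m+1) → Kˣ) j)) := by
    rw [← hfun]
    apply Subtype.ext
    rw [show (Fin.cons (x • logDlog u) (fun j => logDlog (y j)) : Fin (m+1) → LogDiff O K)
        = Function.update (Fin.cons (logDlog u) (fun j => logDlog (y j))) 0 (x • logDlog u)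
        from (Fin.update_cons_zero _ _ _).symm]
    show (ExteriorAlgebra.ιMulti O (m+1))
        (Function.update (Fin.cons (logDlog u) (fun j => logDlog (y j))) 0 (x • logDlog u)) = _
    rw [AlternatingMap.map_update_smul, Fin.update_cons_zero]
    rfl
  have hsub : x • (⟨Ipt.mkQ h, Submodule.mem_map_of_mem hhx⟩ :
        Submodule.map Ipt.mkQ It)
      = (⟨Ipt.mkQ (h * x), Submodule.mem_map_of_mem hxIt⟩ :
        Submodule.map Ipt.mkQ It) := by
    apply Subtype.ext
    show x • Ipt.mkQ h = Ipt.mkQ (h * x)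
    rw [← map_smul, smul_eq_mul, mul_comm]
  rw [hwedge, TensorProduct.tmul_smul, TensorProduct.smul_tmul', hsub,
    hE (h * x) hxIt (Fin.cons u y) uEx huEx]
  rw [QuotientAddGroup.eq_zero_iff]
  exact key_vanish (inferInstance : CharP (IsLocalRing.ResidueField O) p) ht haM hu huEx y
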